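/- There is an absolute constant C with the following property. Let Δ be a finite alphabet, let m ≥ 1, and let h : ℕ → Δ be a sequence generated by a Fibonacci-DFAO with at most m states. Then for every integer c ≥ 0, the shifted sequence i ↦ h(i+c) is generated by a Fibonacci-DFAO with at most C·m²·(c+1)² states. -/

import Mathlib

/-- The Fibonacci (Zeckendorf) value of a binary word written msd-first:
`[x₁⋯x_ℓ] = Σ_j x_j · F_{ℓ−j+2}`. -/
def fibVal : List Bool → ℕ
  | [] => 0
  | a :: rest => (if a then Nat.fib (rest.length + 2) else 0) + fibVal rest

/-- A binary word is a valid Fibonacci representation if it has no factor `11`. -/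
def ValidFib (w : List Bool) : Prop :=
  w.Chain' (fun a b => a = false ∨ b = false)

/-- A deterministic finite automaton with output (DFAO). -/
structure DFAO (α : Type*) (σ : Type*) (Δ : Type*) where
  step : σ → α → σ
  start : σ
  out : σ → Δ

/-- The output of a DFAO on an input word. -/
def DFAO.eval {α σ Δ : Type*} (M : DFAO α σ Δ) (w : List α) : Δ :=
  M.out (w.foldl M.step M.start)

/-- `h : ℕ → Δ` is generated by a Fibonacci-DFAO with at most `m` states:
there is a DFAO with input alphabet `{0,1}` and at most `m` states whose output on
every valid Fibonacci representation `w` (leading zeros allowed) is `h [w]`. -/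
def FibGeneratedBy {Δ : Type*} (h : ℕ → Δ) (m : ℕ) : Prop :=
  ∃ (σ : Type) (_ : Fintype σ) (M : DFAO Bool σ Δ),
    Fintype.card σ ≤ m ∧ ∀ w : List Bool, ValidFib w → M.eval w = h (fibVal w)

namespace FibShiftAux


abbrev Z (k : ℕ) : List Bool := List.replicate k false

lemma fibVal_cons_true (w : List Bool) : fibVal (true :: w) = Nat.fib (w.length + 2) + fibVal w := by
  simp [fibVal]

lemma fibVal_cons_false (w : List Bool) : fibVal (false :: w) = fibVal w := by
  simp [fibVal]

lemma fibVal_replicate (k : ℕ) : fibVal (Z k) = 0 := by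
  induction k with
  | zero => rfl
  | succ n ih => simpa [Z, List.replicate_succ, fibVal_cons_false] using ih

lemma fibVal_append (u v : List Bool) :
    fibVal (u ++ v) = fibVal (u ++ Z v.length) + fibVal v := by
  induction u with
  | nil => simp [fibVal_replicate]
  | cons a u ih =>
      simp only [List.cons_append, fibVal, List.append_eq]
      rw [show ((u ++ Z v.length).length) = (u ++ v).length by simp, ih]
      omega

lemma fibVal_zero_append (j : ℕ) (v : List Bool) : fibVal (Z j ++ v) = fibVal v := by
  induction j with
  | zero => rfl
  | succ n ih => simpa [Z, List.replicate_succ, fibVal_cons_false] using ih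

lemma fibVal_cons_rep (d : Bool) (k : ℕ) :
    fibVal (d :: Z k) = if d then Nat.fib (k + 2) else 0 := by
  simp [fibVal, fibVal_replicate, Z]

lemma fibVal_append_single (u : List Bool) (d : Bool) (k : ℕ) :
    fibVal (u ++ d :: Z k) = fibVal (u ++ Z (k + 1)) + (if d then Nat.fib (k + 2) else 0) := by
  have h := fibVal_append u (d :: Z k)
  simpa [Z, fibVal_cons_rep, List.replicate_succ] using h

lemma valid_append_false {u : List Bool} (h : ValidFib u) : ValidFib (u ++ [false]) := by
  rw [ValidFib, List.Chain', List.isChain_append]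
  exact ⟨h, List.isChain_singleton _, by simp⟩

lemma fibVal_lt : ∀ u : List Bool, ValidFib u → fibVal u < Nat.fib (u.length + 2)
  | [], _ => by simp [fibVal]
  | (false :: w), h => by
      have hw : ValidFib w := h.tail
      have := fibVal_lt w hw
      have hm : Nat.fib (w.length + 2) ≤ Nat.fib (w.length + 1 + 2) :=
        Nat.fib_mono (by omega)
      rw [fibVal_cons_false]
      simpa [List.length_cons] using lt_of_lt_of_le this hm
  | [true], _ => by
      rw [fibVal_cons_true]
      norm_num [fibVal]
  | (true :: true :: w), h => by
      rw [ValidFib, List.Chain', List.isChain_cons_cons] at h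
      rcases h.1 with h1 | h1 <;> simp at h1
  | (true :: false :: w), h => by
      have hw : ValidFib w := h.tail.tail
      have ihw := fibVal_lt w hw
      rw [fibVal_cons_true, fibVal_cons_false]
      simp only [List.length_cons]
      have hf := @Nat.fib_add_two (w.length + 2)
      rw [show w.length + 1 + 1 + 2 = w.length + 2 + 2 by omega,
        show w.length + 1 + 2 = w.length + 2 + 1 by omega]
      omega

lemma lt_fib_add_two (n : ℕ) : n < Nat.fib (n + 2) := by
  induction n with
  | zero => simp
  | succ k ih =>
      have h1 : 0 < Nat.fib (k + 1) := Nat.fib_pos.2 (by omega)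
      have : Nat.fib (k + 1 + 2) = Nat.fib (k + 1) + Nat.fib (k + 2) := Nat.fib_add_two
      omega

lemma exists_rep : ∀ L : ℕ, ∀ n, n < Nat.fib (L + 2) →
    ∃ w : List Bool, ValidFib w ∧ w.length = L ∧ fibVal w = n := by
  intro L
  induction L using Nat.strong_induction_on with
  | _ L ih =>
    match L with
    | 0 =>
        intro n hn
        interval_cases n
        exact ⟨[], List.isChain_nil, rfl, rfl⟩
    | (L + 1) =>
        intro n hn
        by_cases hc : n < Nat.fib (L + 2)
        · obtain ⟨w, hv, hl, he⟩ := ih L (by omega) n hc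
          refine ⟨false :: w, ?_, by simp [hl], by simp [fibVal_cons_false, he]⟩
          exact List.isChain_cons.2 ⟨fun y _ => Or.inl rfl, hv⟩
        · push_neg at hc
          have hfib : Nat.fib (L + 1 + 2) = Nat.fib (L + 1) + Nat.fib (L + 2) := Nat.fib_add_two
          have hrem : n - Nat.fib (L + 2) < Nat.fib (L + 1) := by omega
          match L with
          | 0 =>
              have hn1 : n = 1 := by
                have h2 : Nat.fib (0 + 2) = 1 := by decide
                have h3 : Nat.fib (0 + 1 + 2) = 2 := by decide
                omega
              refine ⟨[true], List.isChain_singleton _, rfl, ?_⟩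
              rw [fibVal_cons_true]; simp [fibVal, hn1]
          | (L' + 1) =>
              obtain ⟨w₂, hv₂, hl₂, he₂⟩ := ih L' (by omega) (n - Nat.fib (L' + 1 + 2))
                (by simpa using hrem)
              refine ⟨true :: false :: w₂, ?_, by simp [hl₂], ?_⟩
              · refine List.isChain_cons_cons.2 ⟨Or.inr rfl, ?_⟩
                exact List.isChain_cons.2 ⟨fun y _ => Or.inl rfl, hv₂⟩
              · rw [fibVal_cons_true, fibVal_cons_false, he₂]
                rw [show ((false :: w₂).length + 2) = L' + 1 + 2 by simp [hl₂]]
                omega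

lemma two_pow_le_fib_sq : ∀ j : ℕ, 1 ≤ j → 2 ^ j ≤ 4 * Nat.fib j ^ 2 := by
  intro j
  induction j using Nat.twoStepInduction with
  | zero => omega
  | one => intro _; decide
  | more n ihn _ =>
      intro _
      match n, ihn with
      | 0, _ => decide
      | (k+1), ihn =>
          have h1 := ihn (by omega)
          have h2 : 2 * Nat.fib (k + 1) ≤ Nat.fib (k + 1 + 2) := by
            have : Nat.fib (k + 1) ≤ Nat.fib (k + 2) := Nat.fib_mono (by omega)
            have hf : Nat.fib (k + 1 + 2) = Nat.fib (k + 1) + Nat.fib (k + 2) := Nat.fib_add_two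
            omega
          have h3 : (2 * Nat.fib (k + 1)) ^ 2 ≤ Nat.fib (k + 1 + 2) ^ 2 :=
            Nat.pow_le_pow_left h2 2
          have h4 : 2 ^ (k + 1 + 2) = 4 * 2 ^ (k + 1) := by ring
          nlinarith [h1, h3]



noncomputable def repPad (L n : ℕ) : List Bool :=
  if h : n < Nat.fib (L + 2) then (exists_rep L n h).choose else []

lemma repPad_spec {L n : ℕ} (h : n < Nat.fib (L + 2)) :
    ValidFib (repPad L n) ∧ (repPad L n).length = L ∧ fibVal (repPad L n) = n := by
  rw [repPad, dif_pos h]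
  exact (exists_rep L n h).choose_spec

/-! ### State space -/

def ShortT (r : ℕ) : Type := {l : List Bool // l.length < r + 1}

def shortEnc (r : ℕ) (x : ShortT r) : List.Vector Bool (r + 2) :=
  ⟨Z (r + 1 - x.1.length) ++ true :: x.1, by
    have := x.2; simp only [List.length_append, List.length_replicate, List.length_cons]; omega⟩

lemma dropWhile_rep (l : List Bool) : ∀ a : ℕ,
    List.dropWhile (fun b => b == false) (Z a ++ true :: l) = true :: l := by
  intro a
  induction a with
  | zero => simp [List.dropWhile]
  | succ n ih => simpa [Z, List.replicate_succ, List.dropWhile] using ih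

lemma shortEnc_inj (r : ℕ) : Function.Injective (shortEnc r) := by
  intro x y hxy
  have h := congrArg (fun v : List.Vector Bool (r + 2) =>
      (List.dropWhile (fun b => b == false) v.1).tail) hxy
  simp only [shortEnc, dropWhile_rep, List.tail_cons] at h
  exact Subtype.ext h

noncomputable instance shortFintype (r : ℕ) : Fintype (ShortT r) :=
  Fintype.ofInjective (shortEnc r) (shortEnc_inj r)

lemma shortCard (r : ℕ) : Fintype.card (ShortT r) ≤ 2 ^ (r + 2) := by
  have h := Fintype.card_le_of_injective (shortEnc r) (shortEnc_inj r)
  simpa [card_vector] using h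

abbrev St (σ : Type) (r : ℕ) : Type :=
  ShortT r ⊕ (σ × σ × Bool × List.Vector Bool (r + 1))

section Construction

variable {σ Δ : Type} (M : DFAO Bool σ Δ) (r c : ℕ)

noncomputable def newOut : St σ r → Δ
  | Sum.inl w => M.eval (repPad (fibVal w.1 + c) (fibVal w.1 + c))
  | Sum.inr (q0, q1, l0, b) =>
      let s := fibVal b.1 + c
      let g0 := bif l0 then Nat.fib (r + 2) else Nat.fib (r + 3)
      if s < g0 then
        M.out ((bif l0 then false :: repPad r s else repPad (r + 1) s).foldl M.step q0)
      else
        M.out ((false :: repPad r (s - g0)).foldl M.step q1)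

def newStep : St σ r → Bool → St σ r
  | Sum.inl w, a =>
      if h : w.1.length + 1 < r + 1 then
        Sum.inl ⟨w.1 ++ [a], by simpa using h⟩
      else
        Sum.inr (M.start, M.step M.start true, false,
          ⟨w.1 ++ [a], by
            have h2 := w.2
            simp only [List.length_append, List.length_cons, List.length_nil]
            omega⟩)
  | Sum.inr (q0, q1, l0, b), a =>
      Sum.inr (M.step q0 b.1.headI,
        bif b.1.headI || l0 then M.step q1 false else M.step q0 true,
        b.1.headI,
        ⟨b.1.tail ++ [a], by
          have h2 := b.2
          simp only [List.length_append, List.length_tail, List.length_cons, List.length_nil]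
          omega⟩)

def stStartX : ℕ := 0

def stStart (σ : Type) (r : ℕ) : St σ r := Sum.inl ⟨[], by simp⟩

noncomputable def newM : DFAO Bool (St σ r) Δ :=
  ⟨newStep M r, stStart σ r, newOut M r c⟩

def Inv (p : List Bool) (st : St σ r) : Prop :=
  (∀ (hp : p.length < r + 1), st = Sum.inl ⟨p, hp⟩) ∧
  (r + 1 ≤ p.length →
    ∃ (ph b : List Bool) (q0 q1 : σ) (l0 : Bool) (hb : b.length = r + 1) (u1 : List Bool),
      p = ph ++ b ∧ st = Sum.inr (q0, q1, l0, ⟨b, hb⟩) ∧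
      q0 = ph.foldl M.step M.start ∧ l0 = ph.getLastD false ∧
      ValidFib u1 ∧ q1 = u1.foldl M.step M.start ∧
      ∀ j : ℕ, fibVal (u1 ++ Z j) = fibVal (ph ++ Z j) + Nat.fib (j + (bif l0 then 1 else 2)))

lemma getLastD_false {l : List Bool} (h : l.getLastD false = false) :
    ∀ x ∈ l.getLast?, x = false := by
  intro x hx
  rw [List.getLastD_eq_getLast?] at h
  have hx' : l.getLast? = some x := hx
  rw [hx'] at h
  simpa using h

lemma inv_run : ∀ p : List Bool, ValidFib p →
    Inv M r p (p.foldl (newStep M r) (stStart σ r)) := by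
  intro p
  induction p using List.reverseRecOn with
  | nil =>
      intro _
      constructor
      · intro hp; rfl
      · intro h; simp at h
  | append_singleton p a ih =>
      intro hv
      have hvp : ValidFib p := (List.isChain_append.1 hv).1
      have ihp := ih hvp
      rw [List.foldl_append]
      simp only [List.foldl_cons, List.foldl_nil]
      rcases Nat.lt_or_ge (p.length + 1) (r + 1) with hlen | hlen
      · -- stays short
        rw [ihp.1 (by omega)]
        constructor
        · intro hp
          simp only [newStep]
          rw [dif_pos hlen]
        · intro h; exfalso; simp at h; omega
      · rcases Nat.lt_or_ge p.length (r + 1) with hlen2 | hlen2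
        · -- transition to full phase: p.length + 1 = r + 1
          rw [ihp.1 hlen2]
          constructor
          · intro hp; exfalso; simp at hp; omega
          · intro _
            simp only [newStep]
            rw [dif_neg (by omega)]
            refine ⟨[], p ++ [a], M.start, M.step M.start true, false, by simp; omega,
              [true], by simp, rfl, rfl, rfl, List.isChain_singleton _, rfl, ?_⟩
            intro j
            have h1 : ([true] : List Bool) ++ Z j = true :: Z j := rfl
            rw [h1, fibVal_cons_rep, List.nil_append, fibVal_replicate]
            simp
        · -- full phase step
          obtain ⟨ph, b, q0, q1, l0, hb, u1, hdec, hst, hq0, hl0, hu1v, hq1, hu1⟩ :=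
            ihp.2 hlen2
          rw [hst]
          cases b with
          | nil => exfalso; simp at hb
          | cons b0 t =>
          have hvpa : ValidFib (ph ++ b0 :: (t ++ [a])) := by
            rw [hdec] at hv; simpa using hv
          have hphv : ValidFib ph := (List.isChain_append.1 hvpa).1
          have hlen_t : (t ++ [a]).length = r + 1 := by simp at hb ⊢; omega
          have hjunc : b0 = true → l0 = false := by
            intro hb0
            subst hb0
            have hj := (List.isChain_append.1 hvpa).2.2
            rw [hl0, List.getLastD_eq_getLast?]
            cases hgl : ph.getLast? with
            | none => rfl
            | some x =>
                have hx := hj x (by rw [hgl]; rfl) true (by simp)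
                rcases hx with hx | hx
                · simp [hx]
                · exact absurd hx (by simp)
          have hstep : (newStep M r (Sum.inr (q0, q1, l0, ⟨b0 :: t, hb⟩)) a : St σ r)
              = Sum.inr (M.step q0 b0,
                  bif b0 || l0 then M.step q1 false else M.step q0 true, b0,
                  ⟨t ++ [a], hlen_t⟩) := by
            simp [newStep]
          rw [hstep]
          constructor
          · intro hp; exfalso; simp at hp; omega
          · intro _
            have hdec' : p ++ [a] = (ph ++ [b0]) ++ (t ++ [a]) := by
              rw [hdec]; simp
            cases b0 with
            | false =>
              cases hl0v : l0 with
              | false =>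
                -- case A : b0 = false, l0 = false, u1' = ph ++ [true]
                refine ⟨ph ++ [false], t ++ [a], _, _, false, hlen_t, ph ++ [true],
                  hdec', rfl, ?_, ?_, ?_, ?_, ?_⟩
                · rw [List.foldl_append, hq0]; rfl
                · simp
                · -- validity of ph ++ [true]
                  rw [ValidFib, List.Chain', List.isChain_append]
                  refine ⟨hphv, List.isChain_singleton _, ?_⟩
                  intro x hx y hy
                  left
                  exact getLastD_false (by rw [← hl0, hl0v]) x hx
                · rw [List.foldl_append, hq0]; rfl
                · intro j
                  try simp only [List.append_assoc, List.singleton_append]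
                  rw [fibVal_append_single, fibVal_append_single]
                  simp
              | true =>
                -- case B : b0 = false, l0 = true, u1' = u1 ++ [false]
                refine ⟨ph ++ [false], t ++ [a], _, _, false, hlen_t, u1 ++ [false],
                  hdec', rfl, ?_, ?_, ?_, ?_, ?_⟩
                · rw [List.foldl_append, hq0]; rfl
                · simp
                · exact valid_append_false hu1v
                · rw [List.foldl_append, hq1]; simp [hl0v]
                · intro j
                  try simp only [List.append_assoc, List.singleton_append]
                  rw [fibVal_append_single, fibVal_append_single]
                  have hj1 := hu1 (j + 1)
                  rw [hl0v] at hj1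
                  simp only [cond] at hj1 ⊢
                  rw [hj1]
                  have : Nat.fib (j + 1 + 1) = Nat.fib (j + 2) := congrArg Nat.fib (by omega)
                  simp [this]
            | true =>
              -- case C : b0 = true, l0 = false, u1' = u1 ++ [false]
              have hl0v : l0 = false := hjunc rfl
              refine ⟨ph ++ [true], t ++ [a], _, _, true, hlen_t, u1 ++ [false],
                hdec', rfl, ?_, ?_, ?_, ?_, ?_⟩
              · rw [List.foldl_append, hq0]; rfl
              · simp
              · exact valid_append_false hu1v
              · rw [List.foldl_append, hq1]; simp [hl0v]
              · intro j
                try simp only [List.append_assoc, List.singleton_append]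
                rw [fibVal_append_single, fibVal_append_single]
                have hj1 := hu1 (j + 1)
                rw [hl0v] at hj1
                have h1 := @Nat.fib_add_two (j + 1)
                have h2 : Nat.fib (j + 1 + 1) = Nat.fib (j + 2) := congrArg Nat.fib (by omega)
                simp only [cond] at hj1 ⊢
                try norm_num
                omega

lemma out_foldl_eval (q : σ) (u w1 : List Bool) (hq : q = u.foldl M.step M.start) :
    M.out (w1.foldl M.step q) = M.eval (u ++ w1) := by
  rw [DFAO.eval, List.foldl_append, hq]

end Construction

lemma valid_cons_false {w1 : List Bool} (h : ValidFib w1) : ValidFib (false :: w1) :=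
  List.isChain_cons.2 ⟨fun _ _ => Or.inl rfl, h⟩

lemma valid_concat {u w1 : List Bool} (hu : ValidFib u) (hw1 : ValidFib w1)
    (hj : (∀ x ∈ u.getLast?, x = false) ∨ w1.head? = some false) : ValidFib (u ++ w1) := by
  rw [ValidFib, List.Chain', List.isChain_append]
  refine ⟨hu, hw1, ?_⟩
  intro x hx y hy
  rcases hj with hj | hj
  · exact Or.inl (hj x hx)
  · right; rw [hj] at hy; simpa using hy

lemma fibVal_concat_len (u v : List Bool) (L : ℕ) (hv : v.length = L) :
    fibVal (u ++ v) = fibVal (u ++ Z L) + fibVal v := by rw [fibVal_append, hv]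

section Correct

variable {σ Δ : Type} (M : DFAO Bool σ Δ) (r c : ℕ)

lemma newM_correct (h : ℕ → Δ) (hM : ∀ w, ValidFib w → M.eval w = h (fibVal w))
    (hc : c ≤ Nat.fib r) :
    ∀ w, ValidFib w → (newM M r c).eval w = h (fibVal w + c) := by
  intro w hw
  have hinv := inv_run M r w hw
  rw [DFAO.eval]
  show newOut M r c (w.foldl (newStep M r) (stStart σ r)) = h (fibVal w + c)
  rcases Nat.lt_or_ge w.length (r + 1) with hlen | hlen
  · rw [hinv.1 hlen]
    show M.eval (repPad (fibVal w + c) (fibVal w + c)) = h (fibVal w + c)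
    obtain ⟨hv1, _, he1⟩ := repPad_spec (lt_fib_add_two (fibVal w + c))
    rw [hM _ hv1, he1]
  · obtain ⟨ph, b, q0, q1, l0, hb, u1, hdec, hst, hq0, hl0, hu1v, hq1, hu1⟩ := hinv.2 hlen
    rw [hst]
    have hbv : ValidFib b := by
      rw [hdec, ValidFib] at hw; exact (List.isChain_append.1 hw).2.1
    have hphv : ValidFib ph := by
      rw [hdec, ValidFib] at hw; exact (List.isChain_append.1 hw).1
    have hblt : fibVal b < Nat.fib (r + 3) := by
      have h1 := fibVal_lt b hbv
      rw [hb] at h1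
      have e : Nat.fib (r + 1 + 2) = Nat.fib (r + 3) := congrArg Nat.fib (by omega)
      omega
    have hsplit : fibVal w = fibVal (ph ++ Z (r + 1)) + fibVal b := by
      rw [hdec, fibVal_append, hb]
    have hu1R := hu1 (r + 1)
    have hfib3 : Nat.fib (r + 3) = Nat.fib (r + 1) + Nat.fib (r + 2) := by
      have := @Nat.fib_add_two (r + 1)
      have e : Nat.fib (r + 1 + 2) = Nat.fib (r + 3) := congrArg Nat.fib (by omega)
      have e2 : Nat.fib (r + 1 + 1) = Nat.fib (r + 2) := congrArg Nat.fib (by omega)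
      omega
    have hfib2 : Nat.fib (r + 2) = Nat.fib r + Nat.fib (r + 1) := Nat.fib_add_two
    simp only [newOut]
    cases l0 with
    | true =>
      simp only [cond] at hu1R ⊢
      by_cases hcase : fibVal b + c < Nat.fib (r + 2)
      · rw [if_pos hcase]
        obtain ⟨hv1, hl1, he1⟩ := repPad_spec (L := r) (n := fibVal b + c) hcase
        rw [out_foldl_eval M q0 ph _ hq0]
        have hvv : ValidFib (ph ++ false :: repPad r (fibVal b + c)) :=
          valid_concat hphv (valid_cons_false hv1) (Or.inr rfl)
        rw [hM _ hvv]
        congr 1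
        rw [fibVal_concat_len _ _ (r + 1) (by simp [hl1]), fibVal_cons_false, he1]
        omega
      · rw [if_neg hcase]
        push_neg at hcase
        have hs' : fibVal b + c - Nat.fib (r + 2) < Nat.fib (r + 2) := by omega
        obtain ⟨hv1, hl1, he1⟩ := repPad_spec (L := r) hs'
        rw [out_foldl_eval M q1 u1 _ hq1]
        have hvv := valid_concat hu1v (valid_cons_false hv1) (Or.inr rfl)
        rw [hM _ hvv]
        congr 1
        rw [fibVal_concat_len _ _ (r + 1) (by simp [hl1]), fibVal_cons_false, he1, hu1R]
        have e2 : Nat.fib (r + 1 + 1) = Nat.fib (r + 2) := congrArg Nat.fib (by omega)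
        omega
    | false =>
      simp only [cond] at hu1R ⊢
      by_cases hcase : fibVal b + c < Nat.fib (r + 3)
      · rw [if_pos hcase]
        have e : fibVal b + c < Nat.fib (r + 1 + 2) := by
          have e1 : Nat.fib (r + 1 + 2) = Nat.fib (r + 3) := congrArg Nat.fib (by omega)
          omega
        obtain ⟨hv1, hl1, he1⟩ := repPad_spec e
        rw [out_foldl_eval M q0 ph _ hq0]
        have hvv := valid_concat hphv hv1 (Or.inl (getLastD_false hl0.symm))
        rw [hM _ hvv]
        congr 1
        rw [fibVal_concat_len _ _ (r + 1) hl1, he1]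
        omega
      · rw [if_neg hcase]
        push_neg at hcase
        have hs' : fibVal b + c - Nat.fib (r + 3) < Nat.fib (r + 2) := by
          have hmono : Nat.fib r ≤ Nat.fib (r + 2) := Nat.fib_mono (by omega)
          omega
        obtain ⟨hv1, hl1, he1⟩ := repPad_spec (L := r) hs'
        rw [out_foldl_eval M q1 u1 _ hq1]
        have hvv := valid_concat hu1v (valid_cons_false hv1) (Or.inr rfl)
        rw [hM _ hvv]
        congr 1
        rw [fibVal_concat_len _ _ (r + 1) (by simp [hl1]), fibVal_cons_false, he1, hu1R]
        have e2 : Nat.fib (r + 1 + 2) = Nat.fib (r + 3) := congrArg Nat.fib (by omega)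
        omega

end Correct
end FibShiftAux

open FibShiftAux

theorem shift_state_complexity :
    ∃ C : ℕ, ∀ (Δ : Type) (_ : Fintype Δ) (m : ℕ), 1 ≤ m →
      ∀ h : ℕ → Δ, FibGeneratedBy h m →
        ∀ c : ℕ, FibGeneratedBy (fun i => h (i + c)) (C * m ^ 2 * (c + 1) ^ 2) := by
  classical
  refine ⟨64, ?_⟩
  intro Δ _ m hm h hgen c
  unfold FibGeneratedBy at hgen ⊢
  obtain ⟨σ, instσ, M, hcard, hM⟩ := hgen
  have hex : ∃ k, c ≤ Nat.fib k := ⟨c + 2, (lt_fib_add_two c).le⟩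
  set r := Nat.find hex with hr
  have hcr : c ≤ Nat.fib r := Nat.find_spec hex
  have hc1 : 1 ≤ (c + 1) ^ 2 := Nat.one_le_pow _ _ (by omega)
  have h2R : 2 ^ (r + 2) ≤ 32 * (c + 1) ^ 2 := by
    rcases Nat.lt_or_ge r 2 with hr2 | hr2
    · have hle : 2 ^ (r + 2) ≤ 2 ^ 3 := Nat.pow_le_pow_right (by omega) (by omega)
      omega
    · have hmin : ¬ c ≤ Nat.fib (r - 1) := Nat.find_min hex (by omega)
      push_neg at hmin
      have h1 : 2 ^ (r - 1) ≤ 4 * Nat.fib (r - 1) ^ 2 := two_pow_le_fib_sq _ (by omega)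
      have h2 : Nat.fib (r - 1) ^ 2 ≤ c ^ 2 := Nat.pow_le_pow_left (by omega) 2
      have h3 : 2 ^ (r + 2) = 8 * 2 ^ (r - 1) := by
        rw [show r + 2 = (r - 1) + 3 by omega, pow_add]
        ring
      have h4 : c ^ 2 ≤ (c + 1) ^ 2 := Nat.pow_le_pow_left (by omega) 2
      omega
  refine ⟨St σ r, inferInstance, newM M r c, ?_, ?_⟩
  · have hshort := shortCard r
    have hcards : Fintype.card (St σ r) =
        Fintype.card (ShortT r) + Fintype.card σ * (Fintype.card σ * (2 * 2 ^ (r + 1))) := by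
      simp [St, Fintype.card_sum, Fintype.card_prod, Fintype.card_bool, card_vector]
    have hb1 : Fintype.card σ * (Fintype.card σ * (2 * 2 ^ (r + 1))) ≤ m * (m * (2 * 2 ^ (r + 1))) :=
      Nat.mul_le_mul hcard (Nat.mul_le_mul hcard (le_refl _))
    have hpow : 2 * 2 ^ (r + 1) = 2 ^ (r + 2) := by ring
    have goal1 : Fintype.card (St σ r) ≤ (1 + m * m) * 2 ^ (r + 2) := by
      rw [hcards]
      calc Fintype.card (ShortT r) + Fintype.card σ * (Fintype.card σ * (2 * 2 ^ (r + 1)))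
          ≤ 2 ^ (r + 2) + m * (m * (2 * 2 ^ (r + 1))) := by omega
        _ = (1 + m * m) * 2 ^ (r + 2) := by rw [hpow]; ring
    have goal2 : (1 + m * m) * 2 ^ (r + 2) ≤ (2 * m ^ 2) * (32 * (c + 1) ^ 2) := by
      have e1 : 1 + m * m ≤ 2 * m ^ 2 := by nlinarith
      exact Nat.mul_le_mul e1 h2R
    calc Fintype.card (St σ r) ≤ (1 + m * m) * 2 ^ (r + 2) := goal1
      _ ≤ (2 * m ^ 2) * (32 * (c + 1) ^ 2) := goal2
      _ = 64 * m ^ 2 * (c + 1) ^ 2 := by ring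
  · intro wv hwv
    simpa using newM_correct M r c h hM hcr wv hwv
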